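/- Let j : ℝ³ → ℝ³ be continuous and periodic with respect to the lattice generated by linearly independent vectors e₁, e₂, e₃, and let Ω_uc be the parallelepiped {ν¹e₁ + ν²e₂ + ν³e₃ : ν ∈ [0,1)³}. Then for any lattice point R, the surface moment integral (1/|Ω_uc|)∫_{R⊕∂Ω_uc} (x−R)·(j·n) dS equals Σ_{k=1}^{3} (e_k ⊗ e^k) ∫_{A_k} j dS, where e^k are the dual basis vectors (e_i·e^j = δ_i^j), A_k is the face of the cell with ν^k = 0, and the face integrals are taken in the parameters ν. -/

import Mathlib

open Real intervalIntegral
open scoped Matrix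

open MeasureTheory

noncomputable def dotCLM (c : Fin 3 → ℝ) : (Fin 3 → ℝ) →L[ℝ] ℝ :=
  LinearMap.toContinuousLinearMap
    { toFun := fun v => c ⬝ᵥ v
      map_add' := fun x y => dotProduct_add c x y
      map_smul' := fun r x => by simp [dotProduct_smul] }

lemma dotCLM_apply (c v : Fin 3 → ℝ) : dotCLM c v = c ⬝ᵥ v := rfl

lemma smul_moment_key (c v0 v1 v2 : Fin 3 → ℝ) (f : ℝ → ℝ → Fin 3 → ℝ)
    (hf : Continuous (Function.uncurry f)) :
    ((∫ s in (0:ℝ)..1, ∫ t in (0:ℝ)..1, (f s t ⬝ᵥ c) • (v0 + s • v1 + t • v2))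
      - ∫ s in (0:ℝ)..1, ∫ t in (0:ℝ)..1, (f s t ⬝ᵥ c) • (s • v1 + t • v2))
    = (c ⬝ᵥ ∫ s in (0:ℝ)..1, ∫ t in (0:ℝ)..1, f s t) • v0 := by
  have hg : Continuous fun p : ℝ × ℝ => f p.1 p.2 ⬝ᵥ c :=
    hf.dotProduct continuous_const
  have hG1 : Continuous (Function.uncurry fun s t =>
      (f s t ⬝ᵥ c) • (v0 + s • v1 + t • v2)) :=
    hg.smul (((continuous_const.add (continuous_fst.smul continuous_const))).add
      (continuous_snd.smul continuous_const))
  have hG2 : Continuous (Function.uncurry fun s t =>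
      (f s t ⬝ᵥ c) • (s • v1 + t • v2)) :=
    hg.smul ((continuous_fst.smul continuous_const).add
      (continuous_snd.smul continuous_const))
  have hI1 : Continuous fun s => ∫ t in (0:ℝ)..1,
      (f s t ⬝ᵥ c) • (v0 + s • v1 + t • v2) :=
    continuous_parametric_intervalIntegral_of_continuous' hG1 0 1
  have hI2 : Continuous fun s => ∫ t in (0:ℝ)..1,
      (f s t ⬝ᵥ c) • (s • v1 + t • v2) :=
    continuous_parametric_intervalIntegral_of_continuous' hG2 0 1
  have hfs : ∀ s : ℝ, Continuous fun t => f s t := fun s => hf.uncurry_left s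
  have hfint : Continuous fun s => ∫ t in (0:ℝ)..1, f s t :=
    continuous_parametric_intervalIntegral_of_continuous' hf 0 1
  rw [← intervalIntegral.integral_sub (hI1.intervalIntegrable 0 1) (hI2.intervalIntegrable 0 1)]
  have step : ∀ s : ℝ,
      ((∫ t in (0:ℝ)..1, (f s t ⬝ᵥ c) • (v0 + s • v1 + t • v2))
        - ∫ t in (0:ℝ)..1, (f s t ⬝ᵥ c) • (s • v1 + t • v2))
      = (c ⬝ᵥ ∫ t in (0:ℝ)..1, f s t) • v0 := by
    intro s
    have h1 : Continuous fun t => (f s t ⬝ᵥ c) • (v0 + s • v1 + t • v2) :=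
      hG1.uncurry_left s
    have h2 : Continuous fun t => (f s t ⬝ᵥ c) • (s • v1 + t • v2) :=
      hG2.uncurry_left s
    rw [← intervalIntegral.integral_sub (h1.intervalIntegrable 0 1) (h2.intervalIntegrable 0 1)]
    have : ∀ t : ℝ, (f s t ⬝ᵥ c) • (v0 + s • v1 + t • v2)
        - (f s t ⬝ᵥ c) • (s • v1 + t • v2) = (f s t ⬝ᵥ c) • v0 := by
      intro t; simp only [smul_add]; abel
    simp only [this]
    rw [intervalIntegral.integral_smul_const]
    congr 1
    have := (dotCLM c).intervalIntegral_comp_comm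
      ((hfs s).intervalIntegrable (μ := volume) 0 1)
    simp only [dotCLM_apply] at this
    rw [← this]
    congr 1
    ext t
    rw [dotProduct_comm]
  simp only [step]
  rw [intervalIntegral.integral_smul_const]
  congr 1
  have := (dotCLM c).intervalIntegral_comp_comm
    (hfint.intervalIntegrable (μ := volume) 0 1)
  simp only [dotCLM_apply] at this
  rw [this]


/-- For a lattice-periodic continuous current `j` and the fundamental parallelepiped
spanned by `e₁, e₂, e₃`, the cell-boundary moment integral
`(1/|Ω_uc|)∫_{R⊕∂Ω_uc}(x−R)(j·n) dS` (written parametrically, face by face, with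
unnormalized area vectors `e_{k+1} × e_{k+2}`) equals
`Σ_k (e_k ⊗ e^k) ∫_{A_k} j dS`, where `e^k = (e_{k+1} × e_{k+2})/[e₁,e₂,e₃]` are the
dual basis vectors and `A_k` is the face `ν^k = 0`. -/

theorem surface_moment_integral_eq_dual_basis_projections
    (e : Fin 3 → Fin 3 → ℝ) (j : (Fin 3 → ℝ) → (Fin 3 → ℝ))
    (hj : Continuous j) (hper : ∀ (x : Fin 3 → ℝ) (i : Fin 3), j (x + e i) = j x)
    (hV : 0 < e 0 ⬝ᵥ (e 1 ⨯₃ e 2)) (R : Fin 3 → ℝ) :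
    (e 0 ⬝ᵥ (e 1 ⨯₃ e 2))⁻¹ •
      (∑ k : Fin 3,
        ((∫ s in (0:ℝ)..1, ∫ t in (0:ℝ)..1,
            (j (R + e k + s • e (k + 1) + t • e (k + 2)) ⬝ᵥ (e (k + 1) ⨯₃ e (k + 2))) •
              (e k + s • e (k + 1) + t • e (k + 2)))
          - ∫ s in (0:ℝ)..1, ∫ t in (0:ℝ)..1,
            (j (R + s • e (k + 1) + t • e (k + 2)) ⬝ᵥ (e (k + 1) ⨯₃ e (k + 2))) •
              (s • e (k + 1) + t • e (k + 2))))
    = ∑ k : Fin 3,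
        ((((e 0 ⬝ᵥ (e 1 ⨯₃ e 2))⁻¹ • (e (k + 1) ⨯₃ e (k + 2))) ⬝ᵥ
            (∫ s in (0:ℝ)..1, ∫ t in (0:ℝ)..1,
              j (R + s • e (k + 1) + t • e (k + 2)))) • e k) := by
  have key : ∀ k : Fin 3,
      ((∫ s in (0:ℝ)..1, ∫ t in (0:ℝ)..1,
          (j (R + e k + s • e (k + 1) + t • e (k + 2)) ⬝ᵥ (e (k + 1) ⨯₃ e (k + 2))) •
            (e k + s • e (k + 1) + t • e (k + 2)))
        - ∫ s in (0:ℝ)..1, ∫ t in (0:ℝ)..1,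
          (j (R + s • e (k + 1) + t • e (k + 2)) ⬝ᵥ (e (k + 1) ⨯₃ e (k + 2))) •
            (s • e (k + 1) + t • e (k + 2)))
      = ((e (k + 1) ⨯₃ e (k + 2)) ⬝ᵥ
          (∫ s in (0:ℝ)..1, ∫ t in (0:ℝ)..1,
            j (R + s • e (k + 1) + t • e (k + 2)))) • e k := by
    intro k
    have hc : Continuous (Function.uncurry fun s t : ℝ =>
        j (R + s • e (k + 1) + t • e (k + 2))) :=
      hj.comp (((continuous_const.add (continuous_fst.smul continuous_const))).add
        (continuous_snd.smul continuous_const))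
    have hper' : ∀ s t : ℝ, j (R + e k + s • e (k + 1) + t • e (k + 2))
        = j (R + s • e (k + 1) + t • e (k + 2)) := by
      intro s t
      rw [show R + e k + s • e (k + 1) + t • e (k + 2)
          = (R + s • e (k + 1) + t • e (k + 2)) + e k by abel, hper]
    simp only [hper']
    exact smul_moment_key _ _ _ _ _ hc
  simp only [key, Finset.smul_sum, smul_dotProduct, smul_smul, smul_eq_mul]
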